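/- arXiv:2403.01563 — 4 statements merged into one kernel-verified Lean document; each statement's English description precedes it below -/
import Mathlib

section
/- For any graph G and any positive integer k, the k-representation number of G equals the k-covering number of G, i.e., θ_k(G) = Φ_k(G). -/
open Finset

/-- The `k`-representation number: the smallest `m` such that there is a family
`(S_v)` of subsets of a set of size `m` with `|S_u ∩ S_v| ≥ k` iff `uv` is an edge. -/
noncomputable def repNumber {V : Type*} [Fintype V] [DecidableEq V]
    (G : SimpleGraph V) (k : ℕ) : ℕ :=
  sInf {m | ∃ S : V → Finset (Fin m),
    ∀ u v : V, u ≠ v → (k ≤ (S u ∩ S v).card ↔ G.Adj u v)}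

/-- The `k`-covering number: the smallest size of a multiset (here, indexed family)
of vertex subsets covering every edge at least `k` times and every non-edge at most
`k - 1` times. -/
noncomputable def coverNumber {V : Type*} [Fintype V] [DecidableEq V]
    (G : SimpleGraph V) (k : ℕ) : ℕ :=
  sInf {m | ∃ C : Fin m → Finset V,
    (∀ u v : V, G.Adj u v →
      k ≤ (Finset.univ.filter fun i => u ∈ C i ∧ v ∈ C i).card) ∧
    (∀ u v : V, u ≠ v → ¬ G.Adj u v →
      (Finset.univ.filter fun i => u ∈ C i ∧ v ∈ C i).card ≤ k - 1)}

/-- For any graph `G` and any positive integer `k`, `θ_k(G) = Φ_k(G)`. -/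
theorem repNumber_eq_coverNumber {V : Type*} [Fintype V] [DecidableEq V]
    (G : SimpleGraph V) (k : ℕ) (hk : 1 ≤ k) :
    repNumber G k = coverNumber G k := by
  unfold repNumber coverNumber
  congr 1
  ext m
  constructor
  · rintro ⟨S, hS⟩
    refine ⟨fun i => univ.filter (fun v => i ∈ S v), ?_, ?_⟩
    · intro u v huv
      have hcard : (univ.filter fun i => u ∈ univ.filter (fun w => i ∈ S w) ∧
          v ∈ univ.filter (fun w => i ∈ S w)).card = (S u ∩ S v).card := by
        congr 1
        ext i
        simp [and_comm]
      rw [hcard]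
      exact (hS u v huv.ne).2 huv
    · intro u v hne hadj
      have hcard : (univ.filter fun i => u ∈ univ.filter (fun w => i ∈ S w) ∧
          v ∈ univ.filter (fun w => i ∈ S w)).card = (S u ∩ S v).card := by
        congr 1
        ext i
        simp [and_comm]
      rw [hcard]
      have := (hS u v hne).not.2 hadj
      omega
  · rintro ⟨C, hC1, hC2⟩
    refine ⟨fun v => univ.filter (fun i => v ∈ C i), ?_⟩
    intro u v hne
    have hcard : ((univ.filter (fun i => u ∈ C i)) ∩ (univ.filter (fun i => v ∈ C i))).card
        = (univ.filter fun i => u ∈ C i ∧ v ∈ C i).card := by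
      congr 1
      ext i
      simp
    rw [hcard]
    constructor
    · intro h
      by_contra hadj
      have := hC2 u v hne hadj
      omega
    · exact hC1 u v
end

section
/- For all real β with 0 ≤ β ≤ 1/2, the binary entropy function satisfies H(1/2 + β) − 1 ≥ −4β². -/
/-- The binary entropy function `H(p) = -p log₂ p - (1-p) log₂ (1-p)`
(with the convention `log 0 = 0`, so `H(1) = 0`). -/
noncomputable def binH (p : ℝ) : ℝ :=
  -(p * Real.logb 2 p) - (1 - p) * Real.logb 2 (1 - p)

open Real Set


noncomputable def G (t : ℝ) : ℝ :=
  2 * t ^ 2 * Real.log 2 - (1 + t) * Real.log (1 + t) - (1 - t) * Real.log (1 - t)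

noncomputable def G' (t : ℝ) : ℝ :=
  4 * t * Real.log 2 - Real.log (1 + t) + Real.log (1 - t)

lemma hasDerivAt_G {t : ℝ} (h1 : -1 < t) (h2 : t < 1) : HasDerivAt G (G' t) t := by
  have hp : (0:ℝ) < 1 + t := by linarith
  have hq : (0:ℝ) < 1 - t := by linarith
  have hu : HasDerivAt (fun t : ℝ => 1 + t) 1 t := (hasDerivAt_id t).const_add 1
  have hv : HasDerivAt (fun t : ℝ => 1 - t) (-1) t := by
    simpa using (hasDerivAt_id t).const_sub 1
  have hlogu : HasDerivAt (fun t : ℝ => Real.log (1 + t)) ((1+t)⁻¹ * 1) t :=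
    (Real.hasDerivAt_log hp.ne').comp t hu
  have hlogv : HasDerivAt (fun t : ℝ => Real.log (1 - t)) ((1-t)⁻¹ * (-1)) t :=
    (Real.hasDerivAt_log hq.ne').comp t hv
  have h1' : HasDerivAt (fun t : ℝ => (1 + t) * Real.log (1 + t))
      (1 * Real.log (1+t) + (1+t) * ((1+t)⁻¹ * 1)) t := hu.mul hlogu
  have h2' : HasDerivAt (fun t : ℝ => (1 - t) * Real.log (1 - t))
      ((-1) * Real.log (1-t) + (1-t) * ((1-t)⁻¹ * (-1))) t := hv.mul hlogv
  have h3 : HasDerivAt (fun t : ℝ => 2 * t ^ 2 * Real.log 2) (2 * (2*t) * Real.log 2) t := by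
    have := (hasDerivAt_pow 2 t).const_mul (2 : ℝ)
    simpa [mul_comm, mul_assoc, mul_left_comm] using this.mul_const (Real.log 2)
  have := (h3.sub h1').sub h2'
  refine this.congr_deriv ?_
  unfold G'
  field_simp
  ring

lemma hasDerivAt_G' {t : ℝ} (h1 : -1 < t) (h2 : t < 1) :
    HasDerivAt G' (4 * Real.log 2 - (1+t)⁻¹ - (1-t)⁻¹) t := by
  have hp : (0:ℝ) < 1 + t := by linarith
  have hq : (0:ℝ) < 1 - t := by linarith
  have hu : HasDerivAt (fun t : ℝ => 1 + t) 1 t := (hasDerivAt_id t).const_add 1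
  have hv : HasDerivAt (fun t : ℝ => 1 - t) (-1) t := by
    simpa using (hasDerivAt_id t).const_sub 1
  have hlogu : HasDerivAt (fun t : ℝ => Real.log (1 + t)) ((1+t)⁻¹ * 1) t :=
    (Real.hasDerivAt_log hp.ne').comp t hu
  have hlogv : HasDerivAt (fun t : ℝ => Real.log (1 - t)) ((1-t)⁻¹ * (-1)) t :=
    (Real.hasDerivAt_log hq.ne').comp t hv
  have h3 : HasDerivAt (fun t : ℝ => 4 * t * Real.log 2) (4 * Real.log 2) t := by
    simpa [mul_comm, mul_assoc] using ((hasDerivAt_id t).const_mul (4:ℝ)).mul_const (Real.log 2)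
  have := (h3.sub hlogu).add hlogv
  refine this.congr_deriv ?_
  ring

lemma G_nonneg {t : ℝ} (h0 : 0 ≤ t) (h1 : t ≤ 1) : 0 ≤ G t := by
  have hL : (0.6931471803 : ℝ) < Real.log 2 := Real.log_two_gt_d9
  have hLpos : (0:ℝ) < Real.log 2 := by linarith
  set c : ℝ := Real.sqrt (1 - 1/(2*Real.log 2)) with hc
  have harg0 : (0:ℝ) < 1 - 1/(2*Real.log 2) := by
    have : 1/(2*Real.log 2) < 1 := by
      rw [div_lt_one (by linarith)]; linarith
    linarith
  have hc0 : 0 < c := Real.sqrt_pos.mpr harg0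
  have hcsq : c ^ 2 = 1 - 1/(2*Real.log 2) := Real.sq_sqrt harg0.le
  have hc1 : c < 1 := by
    nlinarith [hc0, hcsq, div_pos (by norm_num : (0:ℝ)<1) (by linarith : (0:ℝ) < 2*Real.log 2)]
  have hcontG : Continuous G := by
    have hm := Real.continuous_mul_log
    have h1c : Continuous fun t : ℝ => (1 + t) * Real.log (1 + t) :=
      hm.comp (continuous_const.add continuous_id)
    have h2c : Continuous fun t : ℝ => (1 - t) * Real.log (1 - t) :=
      hm.comp (continuous_const.sub continuous_id)
    exact (((continuous_const.mul (continuous_pow 2)).mul continuous_const).sub h1c).sub h2c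
  -- second derivative sign facts
  have hdd : ∀ x : ℝ, -1 < x → x < 1 →
      (1+x)⁻¹ + (1-x)⁻¹ = 2 / (1 - x^2) := by
    intro x hx1 hx2
    have hp : (0:ℝ) < 1 + x := by linarith
    have hq : (0:ℝ) < 1 - x := by linarith
    rw [eq_div_iff (by nlinarith : (1:ℝ) - x^2 ≠ 0)]
    field_simp
    ring
  -- Step A : G' monotone on [0,c]
  have hA : MonotoneOn G' (Icc 0 c) := by
    apply monotoneOn_of_hasDerivWithinAt_nonneg (convex_Icc 0 c)
      (f' := fun x => 4 * Real.log 2 - (1+x)⁻¹ - (1-x)⁻¹)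
    · intro x hx
      have hd := hasDerivAt_G' (show (-1:ℝ) < x by linarith [hx.1]) (show x < 1 by linarith [hx.2, hc1])
      exact hd.continuousAt.continuousWithinAt
    · rw [interior_Icc]
      intro x hx
      have hd := hasDerivAt_G' (show (-1:ℝ) < x by linarith [hx.1]) (show x < 1 by linarith [hx.2, hc1])
      exact hd.hasDerivWithinAt
    · rw [interior_Icc]
      intro x hx
      have hx0 := hx.1; have hxc := hx.2
      have hx1 : x < 1 := lt_trans hxc hc1
      have hxsq : x^2 < c^2 := by nlinarith
      have hpos : 0 < 1 - x^2 := by nlinarith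
      have h5 : 1/(2*Real.log 2) ≤ 1 - x^2 := by nlinarith
      have h6 := mul_le_mul_of_nonneg_left h5 (show (0:ℝ) ≤ 4*Real.log 2 by linarith)
      have h7 : 4*Real.log 2 * (1/(2*Real.log 2)) = 2 := by field_simp; ring
      have key : 2 / (1 - x^2) ≤ 4 * Real.log 2 := by
        rw [div_le_iff₀ hpos]
        linarith
      have := hdd x (by linarith) hx1
      linarith [this, key]
  -- Step B : G' nonneg on [0,c]
  have hG'0 : G' 0 = 0 := by simp [G']
  have hB : ∀ x ∈ Icc (0:ℝ) c, 0 ≤ G' x := by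
    intro x hx
    have := hA (left_mem_Icc.mpr hc0.le) hx hx.1
    linarith [hG'0]
  -- Step C : G monotone on [0,c]
  have hC : MonotoneOn G (Icc 0 c) := by
    apply monotoneOn_of_hasDerivWithinAt_nonneg (convex_Icc 0 c) (f' := G')
    · exact hcontG.continuousOn
    · rw [interior_Icc]
      intro x hx
      have hd := hasDerivAt_G (show (-1:ℝ) < x by linarith [hx.1]) (show x < 1 by linarith [hx.2, hc1])
      exact hd.hasDerivWithinAt
    · rw [interior_Icc]
      intro x hx
      exact hB x ⟨hx.1.le, hx.2.le⟩
  have hG0 : G 0 = 0 := by simp [G]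
  have hD : ∀ x ∈ Icc (0:ℝ) c, 0 ≤ G x := by
    intro x hx
    have := hC (left_mem_Icc.mpr hc0.le) hx hx.1
    linarith [hG0]
  -- Step E : G concave on [c,1]
  have hE : ConcaveOn ℝ (Icc c 1) G := by
    apply concaveOn_of_hasDerivWithinAt2_nonpos (convex_Icc c 1) (f' := G')
      (f'' := fun x => 4 * Real.log 2 - (1+x)⁻¹ - (1-x)⁻¹)
    · exact hcontG.continuousOn
    · rw [interior_Icc]
      intro x hx
      have hd := hasDerivAt_G (show (-1:ℝ) < x by linarith [hx.1, hc0]) hx.2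
      exact hd.hasDerivWithinAt
    · rw [interior_Icc]
      intro x hx
      have hd := hasDerivAt_G' (show (-1:ℝ) < x by linarith [hx.1, hc0]) hx.2
      exact hd.hasDerivWithinAt
    · rw [interior_Icc]
      intro x hx
      have hx0 : 0 < x := lt_of_le_of_lt hc0.le hx.1
      have hx1 : x < 1 := hx.2
      have hxsq : c^2 < x^2 := by nlinarith [hx.1]
      have hpos : 0 < 1 - x^2 := by nlinarith
      have h5 : 1 - x^2 ≤ 1/(2*Real.log 2) := by nlinarith
      have h6 := mul_le_mul_of_nonneg_left h5 (show (0:ℝ) ≤ 4*Real.log 2 by linarith)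
      have h7 : 4*Real.log 2 * (1/(2*Real.log 2)) = 2 := by field_simp; ring
      have key : 4 * Real.log 2 ≤ 2 / (1 - x^2) := by
        rw [le_div_iff₀ hpos]
        linarith
      have := hdd x (by linarith) hx1
      linarith [this, key]
  have hG1 : G 1 = 0 := by norm_num [G]
  -- Step F : conclude
  rcases le_total t c with htc | htc
  · exact hD t ⟨h0, htc⟩
  · have h1c : (0:ℝ) < 1 - c := by linarith
    set a : ℝ := (1 - t)/(1 - c) with ha
    set b : ℝ := (t - c)/(1 - c) with hb
    have ha0 : 0 ≤ a := div_nonneg (by linarith) h1c.le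
    have hb0 : 0 ≤ b := div_nonneg (by linarith) h1c.le
    have hab : a + b = 1 := by rw [ha, hb]; field_simp; ring
    have hcomb : a • c + b • (1:ℝ) = t := by
      rw [smul_eq_mul, smul_eq_mul, ha, hb]
      field_simp
      ring
    have := hE.2 (show c ∈ Icc c 1 by constructor <;> linarith)
      (show (1:ℝ) ∈ Icc c 1 by constructor <;> linarith) ha0 hb0 hab
    rw [hcomb, hG1] at this
    have hGc : 0 ≤ G c := hD c ⟨hc0.le, le_refl c⟩
    have : a * G c ≤ G t := by simpa using this
    nlinarith

/-- For all `0 ≤ β ≤ 1/2`, `H(1/2 + β) − 1 ≥ −4β²`. -/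
theorem binH_half_add_ge (β : ℝ) (h0 : 0 ≤ β) (h1 : β ≤ 1 / 2) :
    binH (1 / 2 + β) - 1 ≥ -4 * β ^ 2 := by
  have hLpos : (0:ℝ) < Real.log 2 := Real.log_pos one_lt_two
  rcases eq_or_lt_of_le h1 with rfl | hlt
  · norm_num [binH]
  · have hp : (0:ℝ) < 1 + 2*β := by linarith
    have hq : (0:ℝ) < 1 - 2*β := by linarith
    have hlogp : Real.log (1/2 + β) = Real.log (1 + 2*β) - Real.log 2 := by
      rw [show (1/2 + β : ℝ) = (1 + 2*β)/2 by ring, Real.log_div hp.ne' two_ne_zero]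
    have hlogq : Real.log (1 - (1/2 + β)) = Real.log (1 - 2*β) - Real.log 2 := by
      rw [show (1 - (1/2 + β) : ℝ) = (1 - 2*β)/2 by ring, Real.log_div hq.ne' two_ne_zero]
    have hkey : 0 ≤ G (2*β) := G_nonneg (by linarith) (by linarith)
    have heq : binH (1/2 + β) - 1 + 4*β^2 = G (2*β) / (2 * Real.log 2) := by
      unfold binH G
      rw [Real.logb, Real.logb, hlogp, hlogq]
      field_simp
      ring
    have : 0 ≤ G (2*β) / (2 * Real.log 2) := div_nonneg hkey (by linarith)
    linarith [heq ▸ this]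
end

section
/- There is an absolute constant c₁ > 0 such that for all integers k ≥ 2 and n ≥ 2: if A = {(x_i, w_i) : i ∈ [m]} satisfies x_i > 0, 0 ≤ w_i ≤ 1, Σ_i w_i(x_i³ − x_i⁴/(8k−2)) ≥ 0, and Σ_i w_i(x_i³ + x_i⁴/2) ≥ k·n²/(3·(9 log n)²), then Σ_i w_i ≥ c₁·n²/(k³·(log n)²). -/
open Finset

private lemma fpc_pointwise (K y : ℝ) (hK : 2 ≤ K) (hy : 0 < y) :
    y^3 + y^4/2 + 8*K*(y^3 - y^4/(8*K-2)) ≤ 5536*K^4 := by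
  have hd : (0:ℝ) < 8*K - 2 := by linarith
  have e : y^3 + y^4/2 + 8*K*(y^3 - y^4/(8*K-2))
      = ((y^3+y^4/2)*(8*K-2) + 8*K*(y^3*(8*K-2) - y^4)) / (8*K-2) := by
    field_simp
  rw [e, div_le_iff₀ hd]
  have h2 : 27*(64*K^2-8*K-2)^4 ≤ 256*(4*K+1)^3*(5536*K^4*(8*K-2)) := by
    nlinarith [sq_nonneg (K-2), sq_nonneg K, sq_nonneg (K^2-2), sq_nonneg (K^3),
      sq_nonneg (K^4 - 2*K^3), mul_pos (by linarith : (0:ℝ) < K) (by linarith : (0:ℝ) < K)]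
  have ha : (0:ℝ) < 64*K^2-8*K-2 := by nlinarith
  have hb : (0:ℝ) < 4*K+1 := by linarith
  have h1 : 0 ≤ (4*(4*K+1)*y - 3*(64*K^2-8*K-2))^2 *
      (16*(4*K+1)^2*y^2 + 8*(64*K^2-8*K-2)*(4*K+1)*y + 3*(64*K^2-8*K-2)^2) := by
    apply mul_nonneg (sq_nonneg _)
    have : 0 ≤ 8*(64*K^2-8*K-2)*(4*K+1)*y := by positivity
    nlinarith [sq_nonneg y, sq_nonneg (64*K^2-8*K-2)]
  nlinarith [h1, h2, pow_pos hb 3, mul_pos (mul_pos hb hb) hb]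

/-- Lower bound for the weight of any `k`-fractional pseudocover: there is an
absolute constant `c₁ > 0` such that `Σ w_i ≥ c₁ n²/(k³ (log n)²)`. -/
theorem fpc_weight_lower_bound :
    ∃ c₁ : ℝ, 0 < c₁ ∧ ∀ (k n m : ℕ), 2 ≤ k → 2 ≤ n →
      ∀ x w : Fin m → ℝ,
        (∀ i, 0 < x i) → (∀ i, 0 ≤ w i ∧ w i ≤ 1) →
        (0 ≤ ∑ i, w i * (x i ^ 3 - x i ^ 4 / (8 * (k : ℝ) - 2))) →
        ((k : ℝ) * (n : ℝ) ^ 2 / (3 * (9 * Real.log n) ^ 2)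
            ≤ ∑ i, w i * (x i ^ 3 + x i ^ 4 / 2)) →
        c₁ * (n : ℝ) ^ 2 / ((k : ℝ) ^ 3 * (Real.log n) ^ 2) ≤ ∑ i, w i := by
  refine ⟨1/1345248, by norm_num, ?_⟩
  intro k n m hk hn x w hx hw hP1 hP2
  set K : ℝ := (k : ℝ) with hKdef
  have hK : (2:ℝ) ≤ K := by rw [hKdef]; exact_mod_cast hk
  have hKpos : (0:ℝ) < K := by linarith
  have hlog : 0 < Real.log n := by
    apply Real.log_pos
    exact_mod_cast hn
  have hn0 : (0:ℝ) < (n:ℝ) := by positivity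
  -- pointwise bound summed
  have step1 : ∀ i, w i * (x i ^ 3 + x i ^ 4 / 2)
      ≤ w i * (5536*K^4) - 8*K*(w i * (x i ^ 3 - x i ^ 4 / (8*K-2))) := by
    intro i
    have h := fpc_pointwise K (x i) hK (hx i)
    have hwi := (hw i).1
    nlinarith [mul_le_mul_of_nonneg_left h hwi]
  have step2 : ∑ i, w i * (x i ^ 3 + x i ^ 4 / 2)
      ≤ (5536*K^4) * ∑ i, w i - 8*K*∑ i, w i * (x i ^ 3 - x i ^ 4 / (8*K-2)) := by
    calc ∑ i, w i * (x i ^ 3 + x i ^ 4 / 2)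
        ≤ ∑ i, (w i * (5536*K^4) - 8*K*(w i * (x i ^ 3 - x i ^ 4 / (8*K-2)))) :=
          Finset.sum_le_sum fun i _ => step1 i
      _ = (5536*K^4) * ∑ i, w i - 8*K*∑ i, w i * (x i ^ 3 - x i ^ 4 / (8*K-2)) := by
          rw [Finset.sum_sub_distrib, ← Finset.mul_sum, ← Finset.sum_mul]
          ring
  have step3 : K * (n:ℝ)^2 / (3 * (9 * Real.log n)^2) ≤ (5536*K^4) * ∑ i, w i := by
    have h8K : 0 ≤ 8*K*∑ i, w i * (x i ^ 3 - x i ^ 4 / (8*K-2)) := by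
      apply mul_nonneg (by linarith) hP1
    linarith [hP2]
  -- final arithmetic
  rw [div_le_iff₀ (by positivity : (0:ℝ) < K^3 * (Real.log n)^2)]
  rw [div_le_iff₀ (by positivity : (0:ℝ) < 3 * (9 * Real.log n)^2)] at step3
  have hM : (0:ℝ) < 5536*K^4 := by positivity
  have := step3
  nlinarith [this, mul_pos (pow_pos hKpos 3) (pow_pos hlog 2), sq_nonneg (Real.log n),
    pow_pos hKpos 4]
end

section
/- Let G be a graph on n vertices satisfying: for every vertex subset X, e(X) = (1/2 ± 2√(log n / |X|))·C(|X|,2). Let k ≥ 2 and let C = {C_1,…,C_m} be a k-cover of G in which every C_i satisfies |C_i| ≤ 9k²·log n. Then, for sufficiently large n, m ≥ n²/(6·k³·(9 log n)²). -/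
open Finset
open scoped Classical

/-- The number of edges of `G` induced by the vertex subset `X`. -/
noncomputable def inducedEdges {n : ℕ} (G : SimpleGraph (Fin n)) (X : Finset (Fin n)) : ℕ :=
  ((Set.toFinite G.edgeSet).toFinset.filter fun e => ∀ v ∈ e, v ∈ X).card

set_option maxHeartbeats 1000000 in
/-- If `G` on `n` vertices is pseudorandom (every subset `X` induces
`(1/2 ± 2√(log n/|X|)) C(|X|,2)` edges) and `C` is a `k`-cover of `G` all of whose
members have size at most `9 k² log n`, then, for sufficiently large `n`,
`m ≥ n²/(6 k³ (9 log n)²)`. -/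
theorem kCover_small_sets_lower_bound :
    ∃ N : ℕ, ∀ n : ℕ, N ≤ n → ∀ (G : SimpleGraph (Fin n)) (k m : ℕ), 2 ≤ k →
      (∀ X : Finset (Fin n),
        |(inducedEdges G X : ℝ) - (1 / 2) * (X.card.choose 2 : ℝ)| ≤
          2 * Real.sqrt (Real.log n / X.card) * (X.card.choose 2 : ℝ)) →
      ∀ C : Fin m → Finset (Fin n),
        (∀ u v : Fin n, G.Adj u v →
          k ≤ (Finset.univ.filter fun i => u ∈ C i ∧ v ∈ C i).card) →
        (∀ u v : Fin n, u ≠ v → ¬ G.Adj u v →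
          (Finset.univ.filter fun i => u ∈ C i ∧ v ∈ C i).card ≤ k - 1) →
        (∀ i, ((C i).card : ℝ) ≤ 9 * (k : ℝ) ^ 2 * Real.log n) →
        (n : ℝ) ^ 2 / (6 * (k : ℝ) ^ 3 * (9 * Real.log n) ^ 2) ≤ (m : ℝ) := by
  use 10240000
  intro n hn G k m hk hpr C hcov hnon hsize
  set E := (Set.toFinite G.edgeSet).toFinset with hE
  -- basic numeric facts
  have hnR : (10240000 : ℝ) ≤ (n : ℝ) := by exact_mod_cast hn
  have hn0 : (0 : ℝ) < n := by linarith
  have hk0 : (0 : ℝ) < (k : ℝ) := by exact_mod_cast (by omega : 0 < k)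
  have hk2 : (2 : ℝ) ≤ (k : ℝ) := by exact_mod_cast hk
  have hL : 0 < Real.log n := Real.log_pos (by linarith)
  -- per-edge coverage
  have hedge : ∀ e ∈ E, k ≤ (univ.filter fun i => ∀ v ∈ e, v ∈ C i).card := by
    intro e he
    rw [hE, Set.Finite.mem_toFinset] at he
    revert he
    refine Sym2.ind (fun u v => ?_) e
    intro he
    rw [SimpleGraph.mem_edgeSet] at he
    refine (hcov u v he).trans (Finset.card_le_card ?_)
    refine Finset.monotone_filter_right _ ?_
    intro i _ hi w hw
    rcases Sym2.mem_iff.1 hw with rfl | rfl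
    · exact hi.1
    · exact hi.2
  -- double counting
  have hsum : k * E.card ≤ ∑ i : Fin m, inducedEdges G (C i) := by
    calc k * E.card = ∑ _e ∈ E, k := by rw [Finset.sum_const, smul_eq_mul, mul_comm]
      _ ≤ ∑ e ∈ E, (univ.filter fun i => ∀ v ∈ e, v ∈ C i).card := Finset.sum_le_sum hedge
      _ = ∑ e ∈ E, ∑ i : Fin m, (if (∀ v ∈ e, v ∈ C i) then 1 else 0) :=
          Finset.sum_congr rfl fun e _ => by rw [Finset.card_filter]
      _ = ∑ i : Fin m, ∑ e ∈ E, (if (∀ v ∈ e, v ∈ C i) then 1 else 0) := Finset.sum_comm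
      _ = ∑ i : Fin m, inducedEdges G (C i) := by
          refine Finset.sum_congr rfl fun i _ => ?_
          rw [inducedEdges, Finset.card_filter]
  -- each set induces at most |C i|^2 edges
  have hcard : ∀ i, inducedEdges G (C i) ≤ (C i).card * (C i).card := by
    intro i
    have hsub : (E.filter fun e => ∀ v ∈ e, v ∈ C i) ⊆
        (C i).offDiag.image fun p => s(p.1, p.2) := by
      intro e he
      rw [Finset.mem_filter, hE, Set.Finite.mem_toFinset] at he
      revert he
      refine Sym2.ind (fun u v => ?_) e
      rintro ⟨hadj, hmem⟩
      rw [SimpleGraph.mem_edgeSet] at hadj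
      exact Finset.mem_image.2 ⟨(u, v), Finset.mem_offDiag.2
        ⟨hmem u (by simp), hmem v (by simp), hadj.ne⟩, rfl⟩
    calc inducedEdges G (C i) ≤ ((C i).offDiag.image fun p => s(p.1, p.2)).card :=
          Finset.card_le_card hsub
      _ ≤ (C i).offDiag.card := Finset.card_image_le
      _ ≤ (C i).card * (C i).card := by rw [Finset.offDiag_card]; omega
  -- the total edge count
  have huniv : inducedEdges G univ = E.card := by
    rw [inducedEdges]
    exact congrArg Finset.card (Finset.filter_true_of_mem fun e _ => fun v _ => Finset.mem_univ v)
  -- analytic bounds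
  have hsqrtn : (3200 : ℝ) ≤ Real.sqrt n := by
    rw [show (3200 : ℝ) = Real.sqrt (3200 ^ 2) by
      rw [Real.sqrt_sq (by norm_num : (0:ℝ) ≤ 3200)]]
    exact Real.sqrt_le_sqrt (by nlinarith)
  have hsq : Real.sqrt (n : ℝ) ^ 2 = (n : ℝ) := Real.sq_sqrt hn0.le
  have hlog_le : Real.log n ≤ 2 * Real.sqrt n := by
    have h1 := Real.log_le_sub_one_of_pos (Real.sqrt_pos.2 hn0)
    have h2 : Real.log n = 2 * Real.log (Real.sqrt n) := by
      rw [Real.log_sqrt hn0.le]; ring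
    nlinarith [Real.sqrt_nonneg (n : ℝ)]
  have hratio : Real.log n / n ≤ 1 / 1600 := by
    rw [div_le_div_iff₀ hn0 (by norm_num)]
    nlinarith
  have hs : Real.sqrt (Real.log n / n) ≤ 1 / 40 := by
    rw [show (1 / 40 : ℝ) = Real.sqrt (1 / 1600) by
      rw [show (1 / 1600 : ℝ) = (1 / 40) ^ 2 by norm_num,
        Real.sqrt_sq (by norm_num : (0:ℝ) ≤ 1/40)]]
    exact Real.sqrt_le_sqrt hratio
  -- lower bound on total edges
  have hA : (n : ℝ) ^ 2 / 5 ≤ (E.card : ℝ) := by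
    have h := hpr univ
    rw [huniv] at h
    have hcardu : (univ : Finset (Fin n)).card = n := by
      rw [Finset.card_univ, Fintype.card_fin]
    rw [hcardu] at h
    have hc : ((n.choose 2 : ℕ) : ℝ) = (n : ℝ) * ((n : ℝ) - 1) / 2 := by
      rw [Nat.cast_choose_two]
    rw [hc] at h
    have habs := abs_le.1 h
    have hcnn : (0 : ℝ) ≤ (n : ℝ) * ((n : ℝ) - 1) / 2 := by nlinarith
    have hsn : (0 : ℝ) ≤ Real.sqrt (Real.log n / n) := Real.sqrt_nonneg _
    nlinarith [habs.1, mul_le_mul_of_nonneg_right hs hcnn]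
  -- combine
  have hsumR : (k : ℝ) * (E.card : ℝ) ≤ ∑ i : Fin m, (inducedEdges G (C i) : ℝ) := by
    have := hsum
    push_cast
    exact_mod_cast this
  have hupper : ∑ i : Fin m, (inducedEdges G (C i) : ℝ) ≤
      (m : ℝ) * (9 * (k : ℝ) ^ 2 * Real.log n) ^ 2 := by
    calc ∑ i : Fin m, (inducedEdges G (C i) : ℝ)
        ≤ ∑ _i : Fin m, (9 * (k : ℝ) ^ 2 * Real.log n) ^ 2 := by
          refine Finset.sum_le_sum fun i _ => ?_
          have h1 : (inducedEdges G (C i) : ℝ) ≤ ((C i).card : ℝ) ^ 2 := by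
            have := hcard i
            have : ((inducedEdges G (C i) : ℕ) : ℝ) ≤ (((C i).card * (C i).card : ℕ) : ℝ) := by
              exact_mod_cast this
            push_cast at this
            nlinarith
          have h2 : ((C i).card : ℝ) ^ 2 ≤ (9 * (k : ℝ) ^ 2 * Real.log n) ^ 2 :=
            pow_le_pow_left₀ (Nat.cast_nonneg _) (hsize i) 2
          linarith
      _ = (m : ℝ) * (9 * (k : ℝ) ^ 2 * Real.log n) ^ 2 := by
          rw [Finset.sum_const, Finset.card_univ, Fintype.card_fin, nsmul_eq_mul]
  have hmain : (k : ℝ) * ((n : ℝ) ^ 2 / 5) ≤ (m : ℝ) * (9 * (k : ℝ) ^ 2 * Real.log n) ^ 2 := by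
    have h1 : (k : ℝ) * ((n : ℝ) ^ 2 / 5) ≤ (k : ℝ) * (E.card : ℝ) :=
      mul_le_mul_of_nonneg_left hA hk0.le
    linarith
  have hden : (0 : ℝ) < 6 * (k : ℝ) ^ 3 * (9 * Real.log n) ^ 2 := by positivity
  rw [div_le_iff₀ hden]
  have hm0 : (0 : ℝ) ≤ (m : ℝ) := Nat.cast_nonneg _
  nlinarith [hmain, mul_nonneg (mul_nonneg hm0 (pow_nonneg hk0.le 4)) (sq_nonneg (Real.log n)),
    mul_nonneg (mul_nonneg hm0 (pow_nonneg hk0.le 3)) (sq_nonneg (Real.log n)), hk2, hL]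
end
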